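/- For every null form Q there is a constant C such that for all C¹ scalar functions u,v on ℝ₊×ℝ³ and all points with x≠0: |Q(∂u,∂v)| ≤ C(|∂u||∂̄v| + |∂̄u||∂v|), where |∂u|=Σ_{α=0}^3|∂_αu| and |∂̄u|=Σ_{α=0}^3|∂̄_αu|. -/

import Mathlib

noncomputable section

open Real MeasureTheory

/-- Spatial points x ∈ ℝ³. -/
abbrev Spc := Fin 3 → ℝ

/-- Spacetime points (t, x) ∈ ℝ × ℝ³. -/
abbrev Pt := ℝ × Spc

/-- Euclidean radius r = |x|. -/
def rad (x : Spc) : ℝ := Real.sqrt (∑ i, x i ^ 2)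

/-- Partial derivative in time, ∂_t. -/
def ptd (u : Pt → ℝ) (p : Pt) : ℝ := deriv (fun s => u (s, p.2)) p.1

/-- Partial derivative in the i-th spatial direction, ∂_i. -/
def pxd (i : Fin 3) (u : Pt → ℝ) (p : Pt) : ℝ :=
  deriv (fun s => u (p.1, Function.update p.2 i s)) (p.2 i)

/-- Radial derivative ∂_r = ω^i ∂_i, with ω_i = x_i / r. -/
def prd (u : Pt → ℝ) (p : Pt) : ℝ := ∑ i, (p.2 i / rad p.2) * pxd i u p

/-- d'Alembertian □ = -∂_t² + Δ. -/
def box (u : Pt → ℝ) (p : Pt) : ℝ := - ptd (ptd u) p + ∑ i, pxd i (pxd i u) p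

/-- Spacetime gradient ∂u = (∂_t u, ∂_1 u, ∂_2 u, ∂_3 u). -/
def sgrad (u : Pt → ℝ) (p : Pt) : Fin 4 → ℝ :=
  ![ptd u p, pxd 0 u p, pxd 1 u p, pxd 2 u p]

/-- Good spatial derivative ∂̄_i = ∂_i - ω_i ∂_r. -/
def gb (i : Fin 3) (u : Pt → ℝ) (p : Pt) : ℝ :=
  pxd i u p - (p.2 i / rad p.2) * prd u p

/-- Good derivatives (∂̄_0, ∂̄_1, ∂̄_2, ∂̄_3), ∂̄_0 = (∂_t+∂_r)/2. -/
def gdrv (u : Pt → ℝ) (p : Pt) : Fin 4 → ℝ :=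
  ![(ptd u p + prd u p) / 2, gb 0 u p, gb 1 u p, gb 2 u p]

/-- |∂u| = Σ_α |∂_α u|. -/
def gradAbs (u : Pt → ℝ) (p : Pt) : ℝ := ∑ α, |sgrad u p α|

/-- |∂̄u| = Σ_α |∂̄_α u|. -/
def gdrvAbs (u : Pt → ℝ) (p : Pt) : ℝ := ∑ α, |gdrv u p α|

/-- Basic null form Q₀(X,Y) = -X₀Y₀ + δ^{ij}X_iY_j. -/
def Q0form (X Y : Fin 4 → ℝ) : ℝ := -(X 0 * Y 0) + X 1 * Y 1 + X 2 * Y 2 + X 3 * Y 3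

/-- Basic null forms Q_{αβ}(X,Y) = X_αY_β - X_βY_α. -/
def Qform (a b : Fin 4) (X Y : Fin 4 → ℝ) : ℝ := X a * Y b - X b * Y a

/-- A null form is a linear combination of Q₀ and the Q_{αβ}. -/
def IsNullForm (Q : (Fin 4 → ℝ) → (Fin 4 → ℝ) → ℝ) : Prop :=
  ∃ (c : ℝ) (d : Fin 4 → Fin 4 → ℝ), ∀ X Y,
    Q X Y = c * Q0form X Y + ∑ a, ∑ b, d a b * Qform a b X Y

/-- First-order operators acting on scalar functions on spacetime. -/
abbrev Op := (Pt → ℝ) → Pt → ℝ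

/-- Scaling vector field S = t∂_t + r∂_r. -/
def vfS : Op := fun u p => p.1 * ptd u p + ∑ i, p.2 i * pxd i u p

/-- Rotations Ω_{ij} = x_i∂_j - x_j∂_i. -/
def vfRot (i j : Fin 3) : Op := fun u p => p.2 i * pxd j u p - p.2 j * pxd i u p

/-- Lorentz boosts Ω_{0i} = -t∂_i - x_i∂_t. -/
def vfBoost (i : Fin 3) : Op := fun u p => -(p.1 * pxd i u p) - p.2 i * ptd u p

/-- The 11 Minkowski vector fields. -/
def mink : Fin 11 → Op :=
  ![ptd, pxd 0, pxd 1, pxd 2, vfS, vfBoost 0, vfBoost 1, vfBoost 2,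
    vfRot 0 1, vfRot 0 2, vfRot 1 2]

/-- Application of a product Z^I of first-order operators, I given as a list. -/
def applyOps (L : List Op) (u : Pt → ℝ) : Pt → ℝ := L.foldr (fun Z v => Z v) u

/-- A multi-index: a word in the Minkowski vector fields. -/
def IsMulti (L : List Op) : Prop := ∀ Z ∈ L, ∃ n : Fin 11, Z = mink n

/-- A word in the spatial rotations only. -/
def IsRotMulti (L : List Op) : Prop :=
  ∀ Z ∈ L, Z = vfRot 0 1 ∨ Z = vfRot 0 2 ∨ Z = vfRot 1 2

/-- The region A^R = {1/R ≤ r - t ≤ R}. -/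
def regA (R : ℝ) : Set Pt := {p | 1 / R ≤ rad p.2 - p.1 ∧ rad p.2 - p.1 ≤ R}

/-- The region B^R = {r - t ≤ R}. -/
def regB (R : ℝ) : Set Pt := {p | rad p.2 - p.1 ≤ R}

/-- The region A₀^R = A^R ∩ {t = 0}. -/
def regA0 (R : ℝ) : Set Spc := {x | 1 / R ≤ rad x ∧ rad x ≤ R}

/-- L² norm of a function on a spatial slice. -/
def L2 (f : Spc → ℝ) : ℝ := (∫ x : Spc, (f x) ^ 2) ^ (1/2 : ℝ)

/-- Weighted Sobolev norm ‖u‖_{H^m_δ} = Σ_{k≤m} ‖⟨x⟩^{δ+k} ∇^k u‖_{L²}. -/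
def sobNorm (m : ℕ) (δ : ℝ) (u : Spc → ℝ) : ℝ :=
  ∑ k ∈ Finset.range (m + 1),
    (∫ x : Spc, ((1 + ∑ i, x i ^ 2) ^ ((δ + k) / 2) * ‖iteratedFDeriv ℝ k u x‖) ^ 2) ^ (1/2 : ℝ)

/-- Membership in the weighted Sobolev space H^m_δ (finiteness of the norm). -/
def MemSob (m : ℕ) (δ : ℝ) (u : Spc → ℝ) : Prop :=
  ∀ k ≤ m, Integrable (fun x : Spc =>
    ((1 + ∑ i, x i ^ 2) ^ ((δ + k) / 2) * ‖iteratedFDeriv ℝ k u x‖) ^ 2)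

/-- ‖f‖_{C^M} ≤ ε, stated derivative by derivative. -/
def CMBound (M : ℕ) (f : Spc → ℝ) (ε : ℝ) : Prop :=
  ∀ k ≤ M, ∀ x, ‖iteratedFDeriv ℝ k f x‖ ≤ ε

/-- The transport operator 𝓛 = ∂_t + ∂_r + 1/r. -/
def opLb : Op := fun u p => ptd u p + prd u p + u p / rad p.2

/-- The spacetime gradient of u = t - r, namely (1, -ω₁, -ω₂, -ω₃). -/
def duTmR (p : Pt) : Fin 4 → ℝ :=
  ![1, -(p.2 0 / rad p.2), -(p.2 1 / rad p.2), -(p.2 2 / rad p.2)]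

/-- Oscillating profiles T_λ^{(k,i)}. -/
def Ttrig (lam : ℝ) (k i : ℤ) (p : Pt) : ℝ :=
  if (k + i) % 2 = 0 then Real.cos (i * (p.1 - rad p.2) / lam)
  else Real.sin (i * (p.1 - rad p.2) / lam)

section NullFormAux

lemma amul {x y X Y : ℝ} (hx : |x| ≤ X) (hy : |y| ≤ Y) : |x * y| ≤ X * Y := by
  rw [abs_mul]; exact mul_le_mul hx hy (abs_nonneg _) ((abs_nonneg x).trans hx)

set_option maxHeartbeats 2000000 in
lemma key_est (X Y Xb Yb : Fin 4 → ℝ) (w : Fin 3 → ℝ)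
    (hw0 : |w 0| ≤ 1) (hw1 : |w 1| ≤ 1) (hw2 : |w 2| ≤ 1)
    (hX0 : Xb 0 = (X 0 + (w 0 * X 1 + w 1 * X 2 + w 2 * X 3)) / 2)
    (hX1 : Xb 1 = X 1 - w 0 * (w 0 * X 1 + w 1 * X 2 + w 2 * X 3))
    (hX2 : Xb 2 = X 2 - w 1 * (w 0 * X 1 + w 1 * X 2 + w 2 * X 3))
    (hX3 : Xb 3 = X 3 - w 2 * (w 0 * X 1 + w 1 * X 2 + w 2 * X 3))
    (hY0 : Yb 0 = (Y 0 + (w 0 * Y 1 + w 1 * Y 2 + w 2 * Y 3)) / 2)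
    (hY1 : Yb 1 = Y 1 - w 0 * (w 0 * Y 1 + w 1 * Y 2 + w 2 * Y 3))
    (hY2 : Yb 2 = Y 2 - w 1 * (w 0 * Y 1 + w 1 * Y 2 + w 2 * Y 3))
    (hY3 : Yb 3 = Y 3 - w 2 * (w 0 * Y 1 + w 1 * Y 2 + w 2 * Y 3)) :
    |Q0form X Y| ≤ 5 * ((|X 0| + |X 1| + |X 2| + |X 3|) * (|Yb 0| + |Yb 1| + |Yb 2| + |Yb 3|)
        + (|Xb 0| + |Xb 1| + |Xb 2| + |Xb 3|) * (|Y 0| + |Y 1| + |Y 2| + |Y 3|))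
    ∧ ∀ a b : Fin 4, |Qform a b X Y| ≤
        5 * ((|X 0| + |X 1| + |X 2| + |X 3|) * (|Yb 0| + |Yb 1| + |Yb 2| + |Yb 3|)
        + (|Xb 0| + |Xb 1| + |Xb 2| + |Xb 3|) * (|Y 0| + |Y 1| + |Y 2| + |Y 3|)) := by
  set A := |X 0| + |X 1| + |X 2| + |X 3| with hA
  set B := |Y 0| + |Y 1| + |Y 2| + |Y 3| with hB
  set Ab := |Xb 0| + |Xb 1| + |Xb 2| + |Xb 3| with hAb
  set Bb := |Yb 0| + |Yb 1| + |Yb 2| + |Yb 3| with hBb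
  have nX : ∀ i : Fin 4, 0 ≤ |X i| := fun i => abs_nonneg _
  have nY : ∀ i : Fin 4, 0 ≤ |Y i| := fun i => abs_nonneg _
  have nXb : ∀ i : Fin 4, 0 ≤ |Xb i| := fun i => abs_nonneg _
  have nYb : ∀ i : Fin 4, 0 ≤ |Yb i| := fun i => abs_nonneg _
  have hx0 : |X 0| ≤ A := by have := nX 1; have := nX 2; have := nX 3; linarith
  have hx1 : |X 1| ≤ A := by have := nX 0; have := nX 2; have := nX 3; linarith
  have hx2 : |X 2| ≤ A := by have := nX 0; have := nX 1; have := nX 3; linarith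
  have hx3 : |X 3| ≤ A := by have := nX 0; have := nX 1; have := nX 2; linarith
  have hy0 : |Y 0| ≤ B := by have := nY 1; have := nY 2; have := nY 3; linarith
  have hy1 : |Y 1| ≤ B := by have := nY 0; have := nY 2; have := nY 3; linarith
  have hy2 : |Y 2| ≤ B := by have := nY 0; have := nY 1; have := nY 3; linarith
  have hy3 : |Y 3| ≤ B := by have := nY 0; have := nY 1; have := nY 2; linarith
  have hxb0 : |Xb 0| ≤ Ab := by have := nXb 1; have := nXb 2; have := nXb 3; linarith
  have hxb1 : |Xb 1| ≤ Ab := by have := nXb 0; have := nXb 2; have := nXb 3; linarith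
  have hxb2 : |Xb 2| ≤ Ab := by have := nXb 0; have := nXb 1; have := nXb 3; linarith
  have hxb3 : |Xb 3| ≤ Ab := by have := nXb 0; have := nXb 1; have := nXb 2; linarith
  have hyb0 : |Yb 0| ≤ Bb := by have := nYb 1; have := nYb 2; have := nYb 3; linarith
  have hyb1 : |Yb 1| ≤ Bb := by have := nYb 0; have := nYb 2; have := nYb 3; linarith
  have hyb2 : |Yb 2| ≤ Bb := by have := nYb 0; have := nYb 1; have := nYb 3; linarith
  have hyb3 : |Yb 3| ≤ Bb := by have := nYb 0; have := nYb 1; have := nYb 2; linarith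
  have hrY : |w 0 * Y 1 + w 1 * Y 2 + w 2 * Y 3| ≤ B := by
    have h1 := amul hw0 (le_refl |Y 1|); have h2 := amul hw1 (le_refl |Y 2|)
    have h3 := amul hw2 (le_refl |Y 3|)
    rw [one_mul] at h1 h2 h3
    calc |w 0 * Y 1 + w 1 * Y 2 + w 2 * Y 3| ≤ |w 0 * Y 1| + |w 1 * Y 2| + |w 2 * Y 3| :=
          abs_add_three _ _ _
      _ ≤ B := by have := nY 0; linarith
  have hrX : |w 0 * X 1 + w 1 * X 2 + w 2 * X 3| ≤ A := by
    have h1 := amul hw0 (le_refl |X 1|); have h2 := amul hw1 (le_refl |X 2|)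
    have h3 := amul hw2 (le_refl |X 3|)
    rw [one_mul] at h1 h2 h3
    calc |w 0 * X 1 + w 1 * X 2 + w 2 * X 3| ≤ |w 0 * X 1| + |w 1 * X 2| + |w 2 * X 3| :=
          abs_add_three _ _ _
      _ ≤ A := by have := nX 0; linarith
  have hA0 : 0 ≤ A := (nX 0).trans hx0
  have hB0 : 0 ≤ B := (nY 0).trans hy0
  have hAb0 : 0 ≤ Ab := (nXb 0).trans hxb0
  have hBb0 : 0 ≤ Bb := (nYb 0).trans hyb0
  have hP1 : 0 ≤ A * Bb := mul_nonneg hA0 hBb0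
  have hP2 : 0 ≤ Ab * B := mul_nonneg hAb0 hB0
  -- Q0 bound
  have q0 : |Q0form X Y| ≤ 5 * (A * Bb + Ab * B) := by
    have e : Q0form X Y = (-2 * X 0) * Yb 0 + (2 * Xb 0) * (w 0 * Y 1 + w 1 * Y 2 + w 2 * Y 3)
        + Xb 1 * Y 1 + Xb 2 * Y 2 + Xb 3 * Y 3 := by
      simp only [Q0form, hX0, hX1, hX2, hX3, hY0]; ring
    have c0 : |(-2 : ℝ) * X 0| ≤ 2 * A := by
      rw [abs_mul]; norm_num; linarith
    have c1 : |(2 : ℝ) * Xb 0| ≤ 2 * Ab := by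
      rw [abs_mul]; norm_num; linarith
    have t1 := amul c0 hyb0
    have t2 := amul c1 hrY
    have t3 := amul hxb1 hy1
    have t4 := amul hxb2 hy2
    have t5 := amul hxb3 hy3
    rw [e]
    calc |(-2 * X 0) * Yb 0 + (2 * Xb 0) * (w 0 * Y 1 + w 1 * Y 2 + w 2 * Y 3)
        + Xb 1 * Y 1 + Xb 2 * Y 2 + Xb 3 * Y 3|
        ≤ |(-2 * X 0) * Yb 0 + (2 * Xb 0) * (w 0 * Y 1 + w 1 * Y 2 + w 2 * Y 3) + Xb 1 * Y 1 + Xb 2 * Y 2| + |Xb 3 * Y 3| := abs_add_le _ _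
      _ ≤ |(-2 * X 0) * Yb 0 + (2 * Xb 0) * (w 0 * Y 1 + w 1 * Y 2 + w 2 * Y 3) + Xb 1 * Y 1| + |Xb 2 * Y 2| + |Xb 3 * Y 3| := by
          have := abs_add_le ((-2 * X 0) * Yb 0 + (2 * Xb 0) * (w 0 * Y 1 + w 1 * Y 2 + w 2 * Y 3) + Xb 1 * Y 1) (Xb 2 * Y 2); linarith
      _ ≤ |(-2 * X 0) * Yb 0| + |(2 * Xb 0) * (w 0 * Y 1 + w 1 * Y 2 + w 2 * Y 3)| + |Xb 1 * Y 1| + |Xb 2 * Y 2| + |Xb 3 * Y 3| := by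
          have := abs_add_three ((-2 * X 0) * Yb 0) ((2 * Xb 0) * (w 0 * Y 1 + w 1 * Y 2 + w 2 * Y 3)) (Xb 1 * Y 1); linarith
      _ ≤ 5 * (A * Bb + Ab * B) := by linarith [t1, t2, t3, t4, t5, hP1, hP2]
  have h01 : |X 0 * Y 1 - X 1 * Y 0| ≤ 5 * (A * Bb + Ab * B) := by
    have e : X 0 * Y 1 - X 1 * Y 0 = X 0 * Yb 1 + (-(Xb 1 * Y 0))
        + w 0 * ((2 * X 0) * Yb 0 + (-((2 * Xb 0) * Y 0))) := by
      simp only [hX1, hY1, hX0, hY0]; ring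
    have c0 : |(2 : ℝ) * X 0| ≤ 2 * A := by rw [abs_mul]; norm_num; linarith
    have c1 : |(2 : ℝ) * Xb 0| ≤ 2 * Ab := by rw [abs_mul]; norm_num; linarith
    have hs : |(2 * X 0) * Yb 0 + (-((2 * Xb 0) * Y 0))| ≤ 2 * A * Bb + 2 * Ab * B := by
      have := abs_add_le ((2 * X 0) * Yb 0) (-((2 * Xb 0) * Y 0))
      rw [abs_neg] at this
      have t1 := amul c0 hyb0
      have t2 := amul c1 hy0
      linarith
    have t3 := amul hw0 hs
    have t4 := amul hx0 hyb1
    have t5 := amul hxb1 hy0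
    rw [e]
    calc |X 0 * Yb 1 + (-(Xb 1 * Y 0)) + w 0 * ((2 * X 0) * Yb 0 + (-((2 * Xb 0) * Y 0)))|
        ≤ |X 0 * Yb 1| + |-(Xb 1 * Y 0)| + |w 0 * ((2 * X 0) * Yb 0 + (-((2 * Xb 0) * Y 0)))| :=
          abs_add_three _ _ _
      _ ≤ 5 * (A * Bb + Ab * B) := by rw [abs_neg]; linarith [t3, t4, t5, hP1, hP2]
  have h02 : |X 0 * Y 2 - X 2 * Y 0| ≤ 5 * (A * Bb + Ab * B) := by
    have e : X 0 * Y 2 - X 2 * Y 0 = X 0 * Yb 2 + (-(Xb 2 * Y 0))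
        + w 1 * ((2 * X 0) * Yb 0 + (-((2 * Xb 0) * Y 0))) := by
      simp only [hX2, hY2, hX0, hY0]; ring
    have c0 : |(2 : ℝ) * X 0| ≤ 2 * A := by rw [abs_mul]; norm_num; linarith
    have c1 : |(2 : ℝ) * Xb 0| ≤ 2 * Ab := by rw [abs_mul]; norm_num; linarith
    have hs : |(2 * X 0) * Yb 0 + (-((2 * Xb 0) * Y 0))| ≤ 2 * A * Bb + 2 * Ab * B := by
      have := abs_add_le ((2 * X 0) * Yb 0) (-((2 * Xb 0) * Y 0))
      rw [abs_neg] at this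
      have t1 := amul c0 hyb0
      have t2 := amul c1 hy0
      linarith
    have t3 := amul hw1 hs
    have t4 := amul hx0 hyb2
    have t5 := amul hxb2 hy0
    rw [e]
    calc |X 0 * Yb 2 + (-(Xb 2 * Y 0)) + w 1 * ((2 * X 0) * Yb 0 + (-((2 * Xb 0) * Y 0)))|
        ≤ |X 0 * Yb 2| + |-(Xb 2 * Y 0)| + |w 1 * ((2 * X 0) * Yb 0 + (-((2 * Xb 0) * Y 0)))| :=
          abs_add_three _ _ _
      _ ≤ 5 * (A * Bb + Ab * B) := by rw [abs_neg]; linarith [t3, t4, t5, hP1, hP2]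
  have h03 : |X 0 * Y 3 - X 3 * Y 0| ≤ 5 * (A * Bb + Ab * B) := by
    have e : X 0 * Y 3 - X 3 * Y 0 = X 0 * Yb 3 + (-(Xb 3 * Y 0))
        + w 2 * ((2 * X 0) * Yb 0 + (-((2 * Xb 0) * Y 0))) := by
      simp only [hX3, hY3, hX0, hY0]; ring
    have c0 : |(2 : ℝ) * X 0| ≤ 2 * A := by rw [abs_mul]; norm_num; linarith
    have c1 : |(2 : ℝ) * Xb 0| ≤ 2 * Ab := by rw [abs_mul]; norm_num; linarith
    have hs : |(2 * X 0) * Yb 0 + (-((2 * Xb 0) * Y 0))| ≤ 2 * A * Bb + 2 * Ab * B := by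
      have := abs_add_le ((2 * X 0) * Yb 0) (-((2 * Xb 0) * Y 0))
      rw [abs_neg] at this
      have t1 := amul c0 hyb0
      have t2 := amul c1 hy0
      linarith
    have t3 := amul hw2 hs
    have t4 := amul hx0 hyb3
    have t5 := amul hxb3 hy0
    rw [e]
    calc |X 0 * Yb 3 + (-(Xb 3 * Y 0)) + w 2 * ((2 * X 0) * Yb 0 + (-((2 * Xb 0) * Y 0)))|
        ≤ |X 0 * Yb 3| + |-(Xb 3 * Y 0)| + |w 2 * ((2 * X 0) * Yb 0 + (-((2 * Xb 0) * Y 0)))| :=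
          abs_add_three _ _ _
      _ ≤ 5 * (A * Bb + Ab * B) := by rw [abs_neg]; linarith [t3, t4, t5, hP1, hP2]
  have h12 : |X 1 * Y 2 - X 2 * Y 1| ≤ 5 * (A * Bb + Ab * B) := by
    have e : X 1 * Y 2 - X 2 * Y 1 = X 1 * Yb 2 + (-(X 2 * Yb 1))
        + (w 0 * Y 1 + w 1 * Y 2 + w 2 * Y 3) * (Xb 1 * w 1 + (-(Xb 2 * w 0))) := by
      simp only [hX1, hX2, hY1, hY2]; ring
    have hs : |Xb 1 * w 1 + (-(Xb 2 * w 0))| ≤ Ab * 1 + Ab * 1 := by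
      have := abs_add_le (Xb 1 * w 1) (-(Xb 2 * w 0))
      rw [abs_neg] at this
      have t1 := amul hxb1 hw1
      have t2 := amul hxb2 hw0
      linarith
    have t3 := amul hrY hs
    have t4 := amul hx1 hyb2
    have t5 := amul hx2 hyb1
    rw [e]
    calc |X 1 * Yb 2 + (-(X 2 * Yb 1)) + (w 0 * Y 1 + w 1 * Y 2 + w 2 * Y 3) * (Xb 1 * w 1 + (-(Xb 2 * w 0)))|
        ≤ |X 1 * Yb 2| + |-(X 2 * Yb 1)| + |(w 0 * Y 1 + w 1 * Y 2 + w 2 * Y 3) * (Xb 1 * w 1 + (-(Xb 2 * w 0)))| :=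
          abs_add_three _ _ _
      _ ≤ 5 * (A * Bb + Ab * B) := by rw [abs_neg]; linarith [t3, t4, t5, hP1, hP2]
  have h13 : |X 1 * Y 3 - X 3 * Y 1| ≤ 5 * (A * Bb + Ab * B) := by
    have e : X 1 * Y 3 - X 3 * Y 1 = X 1 * Yb 3 + (-(X 3 * Yb 1))
        + (w 0 * Y 1 + w 1 * Y 2 + w 2 * Y 3) * (Xb 1 * w 2 + (-(Xb 3 * w 0))) := by
      simp only [hX1, hX3, hY1, hY3]; ring
    have hs : |Xb 1 * w 2 + (-(Xb 3 * w 0))| ≤ Ab * 1 + Ab * 1 := by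
      have := abs_add_le (Xb 1 * w 2) (-(Xb 3 * w 0))
      rw [abs_neg] at this
      have t1 := amul hxb1 hw2
      have t2 := amul hxb3 hw0
      linarith
    have t3 := amul hrY hs
    have t4 := amul hx1 hyb3
    have t5 := amul hx3 hyb1
    rw [e]
    calc |X 1 * Yb 3 + (-(X 3 * Yb 1)) + (w 0 * Y 1 + w 1 * Y 2 + w 2 * Y 3) * (Xb 1 * w 2 + (-(Xb 3 * w 0)))|
        ≤ |X 1 * Yb 3| + |-(X 3 * Yb 1)| + |(w 0 * Y 1 + w 1 * Y 2 + w 2 * Y 3) * (Xb 1 * w 2 + (-(Xb 3 * w 0)))| :=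
          abs_add_three _ _ _
      _ ≤ 5 * (A * Bb + Ab * B) := by rw [abs_neg]; linarith [t3, t4, t5, hP1, hP2]
  have h23 : |X 2 * Y 3 - X 3 * Y 2| ≤ 5 * (A * Bb + Ab * B) := by
    have e : X 2 * Y 3 - X 3 * Y 2 = X 2 * Yb 3 + (-(X 3 * Yb 2))
        + (w 0 * Y 1 + w 1 * Y 2 + w 2 * Y 3) * (Xb 2 * w 2 + (-(Xb 3 * w 1))) := by
      simp only [hX2, hX3, hY2, hY3]; ring
    have hs : |Xb 2 * w 2 + (-(Xb 3 * w 1))| ≤ Ab * 1 + Ab * 1 := by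
      have := abs_add_le (Xb 2 * w 2) (-(Xb 3 * w 1))
      rw [abs_neg] at this
      have t1 := amul hxb2 hw2
      have t2 := amul hxb3 hw1
      linarith
    have t3 := amul hrY hs
    have t4 := amul hx2 hyb3
    have t5 := amul hx3 hyb2
    rw [e]
    calc |X 2 * Yb 3 + (-(X 3 * Yb 2)) + (w 0 * Y 1 + w 1 * Y 2 + w 2 * Y 3) * (Xb 2 * w 2 + (-(Xb 3 * w 1)))|
        ≤ |X 2 * Yb 3| + |-(X 3 * Yb 2)| + |(w 0 * Y 1 + w 1 * Y 2 + w 2 * Y 3) * (Xb 2 * w 2 + (-(Xb 3 * w 1)))| :=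
          abs_add_three _ _ _
      _ ≤ 5 * (A * Bb + Ab * B) := by rw [abs_neg]; linarith [t3, t4, t5, hP1, hP2]
  refine ⟨q0, fun a b => ?_⟩
  have hdiag : (0:ℝ) ≤ 5 * (A * Bb + Ab * B) := by linarith
  fin_cases a <;> fin_cases b <;>
    simp only [Qform, Fin.isValue] <;>
    first
      | (simp only [sub_self, abs_zero]; exact hdiag)
      | exact h01 | exact h02 | exact h03 | exact h12 | exact h13 | exact h23
      | (rw [abs_sub_comm]; first | exact h01 | exact h02 | exact h03 | exact h12 | exact h13 | exact h23)

end NullFormAux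


private lemma rad_pos {x : Spc} (hx : x ≠ 0) : 0 < rad x := by
  rcases Function.ne_iff.mp hx with ⟨j, hj⟩
  exact Real.sqrt_pos.mpr (Finset.sum_pos' (fun k _ => sq_nonneg _)
    ⟨j, Finset.mem_univ _, pow_pos (abs_pos.mpr hj) 2 |>.trans_le (by rw [sq_abs])⟩)

private lemma omega_abs_le {x : Spc} (hx : x ≠ 0) (i : Fin 3) : |x i / rad x| ≤ 1 := by
  have hr := rad_pos hx
  rw [abs_div, abs_of_pos hr, div_le_one hr]
  calc |x i| = Real.sqrt ((x i) ^ 2) := (Real.sqrt_sq_eq_abs _).symm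
    _ ≤ rad x := Real.sqrt_le_sqrt (Finset.single_le_sum (fun k _ => sq_nonneg (x k))
        (Finset.mem_univ i))

/-- null form estimate |Q(∂u,∂v)| ≲ |∂u||∂̄v| + |∂̄u||∂v|. -/
theorem null_form_estimate (Q : (Fin 4 → ℝ) → (Fin 4 → ℝ) → ℝ) (hQ : IsNullForm Q) :
    ∃ C > 0, ∀ u v : Pt → ℝ, ContDiff ℝ 1 u → ContDiff ℝ 1 v →
      ∀ p : Pt, 0 ≤ p.1 → p.2 ≠ 0 →
        |Q (sgrad u p) (sgrad v p)| ≤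
          C * (gradAbs u p * gdrvAbs v p + gdrvAbs u p * gradAbs v p) := by
  obtain ⟨c, d, hcd⟩ := hQ
  set D : ℝ := ∑ a, ∑ b, |d a b| with hD
  have hD0 : 0 ≤ D :=
    Finset.sum_nonneg fun a _ => Finset.sum_nonneg fun b _ => abs_nonneg _
  refine ⟨5 * (|c| + D) + 1, by positivity, fun u v _ _ p _ hx => ?_⟩
  set X := sgrad u p
  set Y := sgrad v p
  set Xb := gdrv u p
  set Yb := gdrv v p
  have hgA : gradAbs u p = |X 0| + |X 1| + |X 2| + |X 3| := by
    simp [gradAbs, Fin.sum_univ_four]; rfl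
  have hgB : gradAbs v p = |Y 0| + |Y 1| + |Y 2| + |Y 3| := by
    simp [gradAbs, Fin.sum_univ_four]; rfl
  have hgAb : gdrvAbs u p = |Xb 0| + |Xb 1| + |Xb 2| + |Xb 3| := by
    simp [gdrvAbs, Fin.sum_univ_four]; rfl
  have hgBb : gdrvAbs v p = |Yb 0| + |Yb 1| + |Yb 2| + |Yb 3| := by
    simp [gdrvAbs, Fin.sum_univ_four]; rfl
  have key := key_est X Y Xb Yb (fun i => p.2 i / rad p.2)
    (omega_abs_le hx 0) (omega_abs_le hx 1) (omega_abs_le hx 2)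
    (by simp [X, Xb, gdrv, sgrad, prd, Fin.sum_univ_three])
    (by simp [X, Xb, gdrv, sgrad, gb, prd, Fin.sum_univ_three])
    (by simp [X, Xb, gdrv, sgrad, gb, prd, Fin.sum_univ_three])
    (by simp [X, Xb, gdrv, sgrad, gb, prd, Fin.sum_univ_three])
    (by simp [Y, Yb, gdrv, sgrad, prd, Fin.sum_univ_three])
    (by simp [Y, Yb, gdrv, sgrad, gb, prd, Fin.sum_univ_three])
    (by simp [Y, Yb, gdrv, sgrad, gb, prd, Fin.sum_univ_three])
    (by simp [Y, Yb, gdrv, sgrad, gb, prd, Fin.sum_univ_three])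
  obtain ⟨hq0, hqab⟩ := key
  set S : ℝ := (|X 0| + |X 1| + |X 2| + |X 3|) * (|Yb 0| + |Yb 1| + |Yb 2| + |Yb 3|)
      + (|Xb 0| + |Xb 1| + |Xb 2| + |Xb 3|) * (|Y 0| + |Y 1| + |Y 2| + |Y 3|) with hS
  have hS0 : 0 ≤ S := by
    rw [hS]; positivity
  have hgoalS : gradAbs u p * gdrvAbs v p + gdrvAbs u p * gradAbs v p = S := by
    rw [hgA, hgB, hgAb, hgBb, hS]
  rw [hcd, hgoalS]
  have hsum : |∑ a, ∑ b, d a b * Qform a b X Y| ≤ D * (5 * S) := by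
    calc |∑ a, ∑ b, d a b * Qform a b X Y|
        ≤ ∑ a, ∑ b, |d a b| * (5 * S) := by
          refine (Finset.abs_sum_le_sum_abs _ _).trans (Finset.sum_le_sum fun a _ => ?_)
          refine (Finset.abs_sum_le_sum_abs _ _).trans (Finset.sum_le_sum fun b _ => ?_)
          rw [abs_mul]
          exact mul_le_mul_of_nonneg_left (hqab a b) (abs_nonneg _)
      _ = D * (5 * S) := by rw [hD]; simp [Finset.sum_mul]
  have hc : |c * Q0form X Y| ≤ |c| * (5 * S) := by
    rw [abs_mul]; exact mul_le_mul_of_nonneg_left hq0 (abs_nonneg _)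
  calc |c * Q0form X Y + ∑ a, ∑ b, d a b * Qform a b X Y|
      ≤ |c * Q0form X Y| + |∑ a, ∑ b, d a b * Qform a b X Y| := abs_add_le _ _
    _ ≤ |c| * (5 * S) + D * (5 * S) := add_le_add hc hsum
    _ = (5 * (|c| + D)) * S := by ring
    _ ≤ (5 * (|c| + D) + 1) * S := mul_le_mul_of_nonneg_right (by linarith) hS0
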